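/- (Interpolation inequality for C^k norms; Proposition 6.6(1) of the paper, after Hamilton.) For all integers 0 ≤ k ≤ l ≤ m with k < m and every dimension d ≥ 1, there is a constant C depending only on k, l, m and d such that every smooth function f : ℝ^d → ℝ with bounded derivatives satisfies |f|_l ≤ C · |f|_k^{(m−l)/(m−k)} · |f|_m^{(l−k)/(m−k)}. -/

import Mathlib

noncomputable section

/-- The `C^j` sup-norm of a map on `ℝ^d`: the supremum over all points of the maximum of the
norms of the iterated derivatives of order at most `j`. -/
def cnorm {d : ℕ} {F : Type*} [NormedAddCommGroup F] [NormedSpace ℝ F]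
    (j : ℕ) (f : (Fin d → ℝ) → F) : ℝ :=
  ⨆ p : (Fin d → ℝ) × Fin (j + 1), ‖iteratedFDeriv ℝ (p.2 : ℕ) f p.1‖

/-- `f` has bounded derivatives of all orders. -/
def BoundedDerivs {d : ℕ} {F : Type*} [NormedAddCommGroup F] [NormedSpace ℝ F]
    (f : (Fin d → ℝ) → F) : Prop :=
  ∀ j : ℕ, ∃ C : ℝ, ∀ x, ‖iteratedFDeriv ℝ j f x‖ ≤ C

open scoped Topology

/-- One-dimensional Landau step: bound on `|g' 0|` in terms of `h`. -/
lemma landau_step (g g' g'' : ℝ → ℝ) (hg : ∀ t, HasDerivAt g (g' t) t)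
    (hg' : ∀ t, HasDerivAt g' (g'' t) t) (M0 M2 : ℝ)
    (hM0 : ∀ t, |g t| ≤ M0) (hM2 : ∀ t, |g'' t| ≤ M2)
    {h : ℝ} (hh : 0 < h) : |g' 0| ≤ 2 * M0 / h + M2 * h := by
  obtain ⟨ξ, hξ, hslope⟩ := exists_hasDerivAt_eq_slope g g' hh
    (fun t _ => (hg t).continuousAt.continuousWithinAt) (fun t _ => hg t)
  obtain ⟨η, hη, hslope'⟩ := exists_hasDerivAt_eq_slope g' g'' hξ.1
    (fun t _ => (hg' t).continuousAt.continuousWithinAt) (fun t _ => hg' t)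
  have hξ0 : (0:ℝ) < ξ := hξ.1
  have e1 : g' ξ * h = g h - g 0 := by
    rw [hslope, sub_zero]; field_simp
  have e2 : (g' ξ - g' 0) = g'' η * ξ := by
    rw [hslope', sub_zero]; field_simp
  have b1 : |g' ξ| * h ≤ 2 * M0 := by
    have : |g' ξ * h| = |g h - g 0| := by rw [e1]
    rw [abs_mul, abs_of_pos hh] at this
    rw [this]
    calc |g h - g 0| ≤ |g h| + |g 0| := abs_sub _ _
      _ ≤ 2 * M0 := by linarith [hM0 h, hM0 0]
  have b2 : |g' ξ - g' 0| ≤ M2 * h := by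
    rw [e2, abs_mul, abs_of_pos hξ0]
    have hM2' : 0 ≤ M2 := le_trans (abs_nonneg _) (hM2 0)
    calc |g'' η| * ξ ≤ M2 * ξ := by gcongr; exact hM2 η
      _ ≤ M2 * h := by nlinarith [hξ.2]
  have : |g' 0| ≤ |g' ξ| + |g' ξ - g' 0| := by
    calc |g' 0| = |g' ξ - (g' ξ - g' 0)| := by ring_nf
      _ ≤ |g' ξ| + |g' ξ - g' 0| := abs_sub _ _
  have hd : |g' ξ| ≤ 2 * M0 / h := by
    rw [le_div_iff₀ hh]; exact b1
  linarith

/-- Optimization over `h`. -/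
lemma landau_opt (A M0 M2 : ℝ) (hA : 0 ≤ A) (hM0 : 0 ≤ M0) (hM2 : 0 ≤ M2)
    (hb : ∀ h : ℝ, 0 < h → A ≤ 2 * M0 / h + M2 * h) : A ^ 2 ≤ 8 * (M0 * M2) := by
  have key : ∀ ε : ℝ, 0 < ε → A ^ 2 ≤ 8 * ((M0 + ε) * (M2 + ε)) := by
    intro ε hε
    set h : ℝ := Real.sqrt (2 * (M0 + ε) / (M2 + ε)) with hh
    have hpos : 0 < 2 * (M0 + ε) / (M2 + ε) := by positivity
    have hhpos : 0 < h := Real.sqrt_pos.mpr hpos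
    have hsq : h ^ 2 = 2 * (M0 + ε) / (M2 + ε) := Real.sq_sqrt hpos.le
    have hsq' : h ^ 2 * (M2 + ε) = 2 * (M0 + ε) := by
      rw [hsq]; field_simp
    have h1 : A ≤ 2 * M0 / h + M2 * h := hb h hhpos
    have h2 : 2 * M0 / h ≤ 2 * (M0 + ε) / h := by gcongr; linarith
    have h3 : 2 * (M0 + ε) / h = (M2 + ε) * h := by
      rw [eq_comm, eq_div_iff (ne_of_gt hhpos)]
      nlinarith [hsq']
    have h4 : A ≤ 2 * ((M2 + ε) * h) := by nlinarith
    nlinarith [sq_nonneg h, sq_nonneg A]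
  refine le_of_forall_pos_le_add fun δ hδ => ?_
  set B := M0 + M2 + 1
  have hB : 0 < B := by positivity
  set ε := min 1 (δ / (8 * B))
  have hε : 0 < ε := lt_min one_pos (by positivity)
  have hε1 : ε ≤ 1 := min_le_left _ _
  have hε2 : ε ≤ δ / (8 * B) := min_le_right _ _
  have := key ε hε
  have h8 : 8 * ε * B ≤ δ := by
    rw [le_div_iff₀ (by positivity)] at hε2
    linarith
  have hεB : (M0 + ε) * (M2 + ε) ≤ M0 * M2 + ε * B := by
    have : ε * ε ≤ ε * 1 := by nlinarith
    simp only [B]; nlinarith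
  calc A ^ 2 ≤ 8 * ((M0 + ε) * (M2 + ε)) := this
    _ ≤ 8 * (M0 * M2) + 8 * ε * B := by nlinarith
    _ ≤ 8 * (M0 * M2) + δ := by linarith
lemma hasDerivAt_iteratedFDeriv_line {d : ℕ} {f : (Fin d → ℝ) → ℝ}
    (hf : ContDiff ℝ (⊤ : ℕ∞) f) (n : ℕ) (x v : Fin d → ℝ)
    (w : Fin n → (Fin d → ℝ)) (t : ℝ) :
    HasDerivAt (fun s : ℝ => iteratedFDeriv ℝ n f (x + s • v) w)
      (iteratedFDeriv ℝ (n + 1) f (x + t • v) (Fin.cons v w)) t := by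
  have hdiff : Differentiable ℝ (iteratedFDeriv ℝ n f) :=
    hf.differentiable_iteratedFDeriv (by exact_mod_cast WithTop.coe_lt_top n)
  have hline : HasDerivAt (fun s : ℝ => x + s • v) v t := by
    simpa using ((hasDerivAt_id t).smul_const v).const_add x
  have hcomp : HasDerivAt (fun s : ℝ => iteratedFDeriv ℝ n f (x + s • v))
      ((fderiv ℝ (iteratedFDeriv ℝ n f) (x + t • v)) v) t :=
    (hdiff _).hasFDerivAt.comp_hasDerivAt t hline
  have happ := ((ContinuousMultilinearMap.apply ℝ (fun _ : Fin n => (Fin d → ℝ)) ℝ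
      w).hasFDerivAt.comp_hasDerivAt t hcomp)
  exact happ

lemma cnorm_nonneg' {d : ℕ} (j : ℕ) (f : (Fin d → ℝ) → ℝ) : 0 ≤ cnorm j f :=
  Real.iSup_nonneg fun _ => norm_nonneg _

lemma cnorm_bddAbove {d : ℕ} {f : (Fin d → ℝ) → ℝ} (hb : BoundedDerivs f) (j : ℕ) :
    BddAbove (Set.range fun p : (Fin d → ℝ) × Fin (j + 1) =>
      ‖iteratedFDeriv ℝ (p.2 : ℕ) f p.1‖) := by
  choose C hC using hb
  refine ⟨⨆ i : Fin (j + 1), C i, ?_⟩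
  rintro _ ⟨p, rfl⟩
  exact le_trans (hC _ _) (le_ciSup (f := fun i : Fin (j + 1) => C (i : ℕ)) (Finite.bddAbove_range _) p.2)

lemma norm_le_cnorm {d : ℕ} {f : (Fin d → ℝ) → ℝ} (hb : BoundedDerivs f)
    {i j : ℕ} (hij : i ≤ j) (x : Fin d → ℝ) :
    ‖iteratedFDeriv ℝ i f x‖ ≤ cnorm j f := by
  have := le_ciSup (cnorm_bddAbove hb j) ((x, ⟨i, by omega⟩) : (Fin d → ℝ) × Fin (j + 1))
  exact this

lemma cnorm_le {d : ℕ} {f : (Fin d → ℝ) → ℝ} {j : ℕ} {B : ℝ}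
    (hB : ∀ (x : Fin d → ℝ) (i : Fin (j + 1)), ‖iteratedFDeriv ℝ (i : ℕ) f x‖ ≤ B) :
    cnorm j f ≤ B :=
  ciSup_le fun p => hB p.1 p.2

lemma cnorm_mono {d : ℕ} {f : (Fin d → ℝ) → ℝ} (hb : BoundedDerivs f)
    {i j : ℕ} (hij : i ≤ j) : cnorm i f ≤ cnorm j f :=
  cnorm_le fun x k => norm_le_cnorm hb (by omega : (k : ℕ) ≤ j) x
lemma cnorm_key {d : ℕ} {f : (Fin d → ℝ) → ℝ} (hf : ContDiff ℝ (⊤ : ℕ∞) f)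
    (hb : BoundedDerivs f) (n : ℕ) :
    cnorm (n + 1) f ^ 2 ≤ 8 * (cnorm n f * cnorm (n + 2) f) := by
  set B : ℝ := Real.sqrt (8 * (cnorm n f * cnorm (n + 2) f)) with hB
  have hprod : 0 ≤ 8 * (cnorm n f * cnorm (n + 2) f) := by
    have := cnorm_nonneg' n f; have := cnorm_nonneg' (n + 2) f; positivity
  have hBsq : B ^ 2 = 8 * (cnorm n f * cnorm (n + 2) f) := Real.sq_sqrt hprod
  have hBnn : 0 ≤ B := Real.sqrt_nonneg _
  -- Step 1 : pointwise bound on order n+1 derivative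
  have step1 : ∀ x : Fin d → ℝ, ‖iteratedFDeriv ℝ (n + 1) f x‖ ≤ B := by
    intro x
    refine ContinuousMultilinearMap.opNorm_le_bound hBnn fun v => ?_
    set v0 : Fin d → ℝ := v 0 with hv0
    set w : Fin n → (Fin d → ℝ) := Fin.tail v with hw
    set P : ℝ := ∏ i : Fin n, ‖w i‖ with hP
    have hPnn : 0 ≤ P := Finset.prod_nonneg fun _ _ => norm_nonneg _
    set g : ℝ → ℝ := fun s => iteratedFDeriv ℝ n f (x + s • v0) w with hg
    set g' : ℝ → ℝ := fun s =>
      iteratedFDeriv ℝ (n + 1) f (x + s • v0) (Fin.cons v0 w) with hg'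
    set g'' : ℝ → ℝ := fun s =>
      iteratedFDeriv ℝ (n + 2) f (x + s • v0) (Fin.cons v0 (Fin.cons v0 w)) with hg''
    have hdg : ∀ t, HasDerivAt g (g' t) t := fun t =>
      hasDerivAt_iteratedFDeriv_line hf n x v0 w t
    have hdg' : ∀ t, HasDerivAt g' (g'' t) t := fun t =>
      hasDerivAt_iteratedFDeriv_line hf (n + 1) x v0 (Fin.cons v0 w) t
    set M0 : ℝ := cnorm n f * P with hM0def
    set M2 : ℝ := cnorm (n + 2) f * (‖v0‖ * (‖v0‖ * P)) with hM2def
    have hM0 : ∀ t, |g t| ≤ M0 := by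
      intro t
      calc |g t| ≤ ‖iteratedFDeriv ℝ n f (x + t • v0)‖ * P :=
            (iteratedFDeriv ℝ n f (x + t • v0)).le_opNorm w
        _ ≤ cnorm n f * P := by
            gcongr
            exact norm_le_cnorm hb le_rfl _
    have hM2 : ∀ t, |g'' t| ≤ M2 := by
      intro t
      have h1 : |g'' t| ≤ ‖iteratedFDeriv ℝ (n + 2) f (x + t • v0)‖ *
          ∏ i : Fin (n + 2), ‖(Fin.cons v0 (Fin.cons v0 w) : Fin (n+2) → (Fin d → ℝ)) i‖ :=
        (iteratedFDeriv ℝ (n + 2) f (x + t • v0)).le_opNorm _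
      have h2 : ∏ i : Fin (n + 2), ‖(Fin.cons v0 (Fin.cons v0 w) : Fin (n+2) → (Fin d → ℝ)) i‖
          = ‖v0‖ * (‖v0‖ * P) := by
        rw [Fin.prod_univ_succ, Fin.prod_univ_succ]
        simp [Fin.cons_succ, hP]
      rw [h2] at h1
      refine h1.trans ?_
      exact mul_le_mul_of_nonneg_right (norm_le_cnorm hb le_rfl _)
        (by have := hPnn; positivity)
    have hA : |g' 0| ^ 2 ≤ 8 * (M0 * M2) := by
      refine landau_opt _ _ _ (abs_nonneg _) ?_ ?_ ?_
      · have := cnorm_nonneg' n f; positivity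
      · have := cnorm_nonneg' (n + 2) f; positivity
      · intro h hh
        exact landau_step g g' g'' hdg hdg' M0 M2 hM0 hM2 hh
    have hg'0 : g' 0 = iteratedFDeriv ℝ (n + 1) f x v := by
      simp only [hg', zero_smul, add_zero]
      congr 1
      exact Fin.cons_self_tail v
    have hPv : ∏ i : Fin (n + 1), ‖v i‖ = ‖v0‖ * P := by
      rw [Fin.prod_univ_succ]
      rfl
    rw [hg'0] at hA
    rw [hPv]
    have hsq : ‖iteratedFDeriv ℝ (n + 1) f x v‖ ^ 2 ≤ (B * (‖v0‖ * P)) ^ 2 := by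
      have : (B * (‖v0‖ * P)) ^ 2 = 8 * (M0 * M2) := by
        rw [mul_pow, hBsq, hM0def, hM2def]; ring
      rw [this]
      simpa [Real.norm_eq_abs] using hA
    have h1 : (0:ℝ) ≤ B * (‖v0‖ * P) := by positivity
    exact (pow_le_pow_iff_left₀ (norm_nonneg _) h1 two_ne_zero).mp hsq
  -- Step 2 : cnorm (n+1) f ≤ max (cnorm n f) B
  have step2 : cnorm (n + 1) f ≤ max (cnorm n f) B := by
    refine cnorm_le fun x i => ?_
    rcases Nat.lt_or_ge (i : ℕ) (n + 1) with hi | hi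
    · exact le_trans (norm_le_cnorm hb (by omega) x) (le_max_left _ _)
    · have : (i : ℕ) = n + 1 := by omega
      rw [this]
      exact le_trans (step1 x) (le_max_right _ _)
  have han : cnorm n f ≤ cnorm (n + 2) f := cnorm_mono hb (by omega)
  have hnn : 0 ≤ cnorm n f := cnorm_nonneg' n f
  have h2 : cnorm (n + 1) f ^ 2 ≤ max (cnorm n f) B ^ 2 :=
    pow_le_pow_left₀ (cnorm_nonneg' _ f) step2 2
  refine h2.trans ?_
  rcases max_cases (cnorm n f) B with ⟨hm, _⟩ | ⟨hm, _⟩ <;> rw [hm]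
  · nlinarith
  · rw [hBsq]
lemma ratio_lemma (c : ℕ → ℝ) (h0 : ∀ j, 0 ≤ c j)
    (hc : ∀ j, c (j + 1) ^ 2 ≤ c j * c (j + 2)) :
    ∀ i j, j ≤ i → c (j + 1) * c i ≤ c j * c (i + 1) := by
  intro i
  induction i with
  | zero =>
    intro j hj
    have : j = 0 := by omega
    rw [this]; ring_nf; exact le_refl _
  | succ i ih =>
    intro j hj
    rcases Nat.eq_or_lt_of_le hj with he | hlt
    · rw [he]; ring_nf; exact le_refl _
    · have hji : j ≤ i := by omega
      by_cases hz : c (i + 1) = 0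
      · rw [hz, mul_zero]
        exact mul_nonneg (h0 _) (h0 _)
      · have hpos : 0 < c (i + 1) := lt_of_le_of_ne (h0 _) (Ne.symm hz)
        have h1 := ih j hji
        have h2 := hc i
        nlinarith [h0 (j + 1), h0 j, h0 i, h0 (i + 2), mul_le_mul_of_nonneg_right h1 (h0 (i + 2))]

lemma step_lemma (c : ℕ → ℝ) (h0 : ∀ j, 0 ≤ c j)
    (hc : ∀ j, c (j + 1) ^ 2 ≤ c j * c (j + 2)) :
    ∀ l k m, k ≤ l → l ≤ m + 1 → c l * c m ^ (l - k) ≤ c k * c (m + 1) ^ (l - k) := by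
  intro l
  induction l with
  | zero =>
    intro k m hk _
    have : k = 0 := by omega
    simp [this]
  | succ l ih =>
    intro k m hkl hlm
    rcases Nat.eq_or_lt_of_le hkl with he | hlt
    · rw [he]; simp
    · have hkl' : k ≤ l := by omega
      have hlm' : l ≤ m := by omega
      have hexp : l + 1 - k = (l - k) + 1 := by omega
      have hr : c (l + 1) * c m ≤ c l * c (m + 1) := ratio_lemma c h0 hc m l hlm'
      have hih := ih k m hkl' (by omega)
      calc c (l + 1) * c m ^ (l + 1 - k) = (c (l + 1) * c m) * c m ^ (l - k) := by
            rw [hexp, pow_succ]; ring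
        _ ≤ (c l * c (m + 1)) * c m ^ (l - k) :=
            mul_le_mul_of_nonneg_right hr (pow_nonneg (h0 _) _)
        _ = (c l * c m ^ (l - k)) * c (m + 1) := by ring
        _ ≤ (c k * c (m + 1) ^ (l - k)) * c (m + 1) :=
            mul_le_mul_of_nonneg_right hih (h0 _)
        _ = c k * c (m + 1) ^ (l + 1 - k) := by rw [hexp, pow_succ]; ring

lemma logconvex (c : ℕ → ℝ) (h0 : ∀ j, 0 ≤ c j)
    (hc : ∀ j, c (j + 1) ^ 2 ≤ c j * c (j + 2)) (k l : ℕ) (hkl : k ≤ l) :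
    ∀ m, l ≤ m → c l ^ (m - k) ≤ c k ^ (m - l) * c m ^ (l - k) := by
  intro m
  induction m with
  | zero =>
    intro hl0
    have hl : l = 0 := by omega
    have hk : k = 0 := by omega
    simp [hl, hk]
  | succ m ih =>
    intro hlm
    rcases Nat.eq_or_lt_of_le hlm with he | hlt
    · rw [← he]
      simp [Nat.sub_self]
    · have hlm' : l ≤ m := by omega
      have hkm : k ≤ m := le_trans hkl hlm'
      have e1 : m + 1 - k = (m - k) + 1 := by omega
      have e2 : m + 1 - l = (m - l) + 1 := by omega
      have hih := ih hlm'
      have hstep := step_lemma c h0 hc l k m hkl (by omega)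
      calc c l ^ (m + 1 - k) = c l * c l ^ (m - k) := by rw [e1, pow_succ]; ring
        _ ≤ c l * (c k ^ (m - l) * c m ^ (l - k)) :=
            mul_le_mul_of_nonneg_left hih (h0 _)
        _ = (c l * c m ^ (l - k)) * c k ^ (m - l) := by ring
        _ ≤ (c k * c (m + 1) ^ (l - k)) * c k ^ (m - l) :=
            mul_le_mul_of_nonneg_right hstep (pow_nonneg (h0 _) _)
        _ = c k ^ (m + 1 - l) * c (m + 1) ^ (l - k) := by rw [e2, pow_succ]; ring

/-- Interpolation inequality for `C^k` norms (Hamilton):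
`|f|_l ≤ C |f|_k^((m-l)/(m-k)) |f|_m^((l-k)/(m-k))` for `k ≤ l ≤ m`, `k < m`. -/
theorem cnorm_interpolation (k l m d : ℕ) (hkl : k ≤ l) (hlm : l ≤ m) (hkm : k < m)
    (hd : 1 ≤ d) :
    ∃ C : ℝ, ∀ f : (Fin d → ℝ) → ℝ, ContDiff ℝ (⊤ : ℕ∞) f → BoundedDerivs f →
      cnorm l f ≤ C * cnorm k f ^ (((m : ℝ) - l) / ((m : ℝ) - k))
        * cnorm m f ^ (((l : ℝ) - k) / ((m : ℝ) - k)) := by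
  set p : ℕ := m - k with hpdef
  set q : ℕ := m - l with hqdef
  set r : ℕ := l - k with hrdef
  have hqc : ((q : ℕ) : ℝ) = (m : ℝ) - l := by
    rw [hqdef]; exact Nat.cast_sub hlm
  have hpc : ((p : ℕ) : ℝ) = (m : ℝ) - k := by
    rw [hpdef]; exact Nat.cast_sub hkm.le
  have hrc : ((r : ℕ) : ℝ) = (l : ℝ) - k := by
    rw [hrdef]; exact Nat.cast_sub hkl
  have hP0 : (0 : ℝ) < (m : ℝ) - k := by
    have : (k : ℝ) < m := by exact_mod_cast hkm
    linarith
  set D : ℝ := (8 : ℝ) ^ (k ^ 2 * q + m ^ 2 * r) with hDdef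
  have hD1 : (1 : ℝ) ≤ D := one_le_pow₀ (by norm_num)
  have hD0 : (0 : ℝ) ≤ D := by linarith
  refine ⟨D ^ (((m : ℝ) - k)⁻¹), ?_⟩
  intro f hf hbd
  set a : ℕ → ℝ := fun j => cnorm j f with ha
  have hann : ∀ j, 0 ≤ a j := fun j => cnorm_nonneg' j f
  have key : ∀ n, a (n + 1) ^ 2 ≤ 8 * (a n * a (n + 2)) := fun n => cnorm_key hf hbd n
  set c : ℕ → ℝ := fun j => (8 : ℝ) ^ (j ^ 2) * a j with hcdef
  have hc0 : ∀ j, 0 ≤ c j := by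
    intro j; simp only [hcdef]
    have := hann j; positivity
  have hcineq : ∀ j, c (j + 1) ^ 2 ≤ c j * c (j + 2) := by
    intro j
    have hk := key j
    have ha1 : (0 : ℝ) ≤ a j * a (j + 2) := mul_nonneg (hann _) (hann _)
    have e : c j * c (j + 2) = (8 : ℝ) ^ (j ^ 2 + (j + 2) ^ 2) * (a j * a (j + 2)) := by
      simp only [hcdef]; rw [pow_add]; ring
    have e2 : c (j + 1) ^ 2 = (8 : ℝ) ^ (2 * (j + 1) ^ 2) * a (j + 1) ^ 2 := by
      simp only [hcdef]; rw [mul_pow, ← pow_mul]; ring_nf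
    have eexp : j ^ 2 + (j + 2) ^ 2 = 2 * (j + 1) ^ 2 + 2 := by ring
    calc c (j + 1) ^ 2 = (8 : ℝ) ^ (2 * (j + 1) ^ 2) * a (j + 1) ^ 2 := e2
      _ ≤ (8 : ℝ) ^ (2 * (j + 1) ^ 2) * (8 * (a j * a (j + 2))) :=
          mul_le_mul_of_nonneg_left hk (by positivity)
      _ = (8 : ℝ) ^ (2 * (j + 1) ^ 2 + 1) * (a j * a (j + 2)) := by rw [pow_succ]; ring
      _ ≤ (8 : ℝ) ^ (j ^ 2 + (j + 2) ^ 2) * (a j * a (j + 2)) := by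
          refine mul_le_mul_of_nonneg_right ?_ ha1
          refine pow_le_pow_right₀ (by norm_num) ?_
          omega
      _ = c j * c (j + 2) := e.symm
  have hmain0 := logconvex c hc0 hcineq k l hkl m hlm
  -- translate to a
  have eL : c l ^ p = (8 : ℝ) ^ (l ^ 2 * p) * a l ^ p := by
    simp only [hcdef]; rw [mul_pow, ← pow_mul]
  have eR : c k ^ q * c m ^ r = D * (a k ^ q * a m ^ r) := by
    simp only [hcdef, hDdef]
    rw [mul_pow, mul_pow, ← pow_mul, ← pow_mul]; ring
  have hmain : a l ^ p ≤ D * (a k ^ q * a m ^ r) := by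
    have h1 : a l ^ p ≤ c l ^ p := by
      rw [eL]
      exact le_mul_of_one_le_left (pow_nonneg (hann _) _)
        (one_le_pow₀ (by norm_num))
    exact h1.trans (hmain0.trans_eq eR)
  -- pass to rpow
  set P : ℝ := (m : ℝ) - k with hPdef
  have hPne : P ≠ 0 := ne_of_gt hP0
  have h5 : a l = ((a l ^ (p : ℕ) : ℝ)) ^ (P⁻¹) := by
    rw [← Real.rpow_natCast (a l) p, ← Real.rpow_mul (hann l), hpc]
    rw [mul_inv_cancel₀ hPne, Real.rpow_one]
  have h6 : a l ≤ (D * (a k ^ q * a m ^ r)) ^ (P⁻¹) := by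
    rw [h5]
    exact Real.rpow_le_rpow (pow_nonneg (hann l) p) hmain (inv_nonneg.mpr hP0.le)
  have h7 : (D * (a k ^ q * a m ^ r)) ^ (P⁻¹)
      = D ^ (P⁻¹) * ((a k ^ q : ℝ) ^ (P⁻¹) * (a m ^ r : ℝ) ^ (P⁻¹)) := by
    rw [Real.mul_rpow hD0 (mul_nonneg (pow_nonneg (hann k) q) (pow_nonneg (hann m) r)),
      Real.mul_rpow (pow_nonneg (hann k) q) (pow_nonneg (hann m) r)]
  have h8 : (a k ^ (q : ℕ) : ℝ) ^ (P⁻¹) = a k ^ (((m : ℝ) - l) / P) := by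
    rw [← Real.rpow_natCast (a k) q, ← Real.rpow_mul (hann k), hqc, div_eq_mul_inv]
  have h9 : (a m ^ (r : ℕ) : ℝ) ^ (P⁻¹) = a m ^ (((l : ℝ) - k) / P) := by
    rw [← Real.rpow_natCast (a m) r, ← Real.rpow_mul (hann m), hrc, div_eq_mul_inv]
  calc cnorm l f = a l := rfl
    _ ≤ (D * (a k ^ q * a m ^ r)) ^ (P⁻¹) := h6
    _ = D ^ (P⁻¹) * a k ^ (((m : ℝ) - l) / P) * a m ^ (((l : ℝ) - k) / P) := by
        rw [h7, h8, h9]; ring
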